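/- Suppose the utility-optimal price equals the maximal price p_x (where V(p_x) = p_x and the value function is flat above p_x). Then setting the revenue-optimal price p_rev achieves expected utility at least UTIL_max − s_rev·(p_x − p_rev), where s_rev = V'(p_rev) is the slope of the value function at p_rev and UTIL_max is the optimal expected utility. -/

import Mathlib

open MeasureTheory

/-- If the utility-optimal price equals the maximal price `p_x` (where `V(p_x) = p_x`
and `V` is flat above `p_x`), then the revenue-optimal price `p_rev` achieves
expected utility at least `UTIL_max − V'(p_rev)·(p_x − p_rev)`. -/
lemma tangent_le (V : ℝ → ℝ) {a b d : ℝ} (hab : a < b)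
    (hconc : ConcaveOn ℝ (Set.Icc 0 b) V) (ha : a ∈ Set.Icc 0 b)
    (hd : HasDerivAt V d a) : V b - V a ≤ d * (b - a) := by
  have hb : b ∈ Set.Icc 0 b := Set.right_mem_Icc.mpr (ha.1.trans hab.le)
  have hslope : slope V a b ≤ d := by
    have htends : Filter.Tendsto (slope V a) (nhdsWithin a (Set.Ioi a)) (nhds d) :=
      (hasDerivAt_iff_tendsto_slope.mp hd).mono_left
        (nhdsWithin_mono a fun x hx => ne_of_gt hx)
    refine ge_of_tendsto htends ?_
    filter_upwards [Ioo_mem_nhdsGT_of_mem (Set.left_mem_Ico.mpr hab)] with t ht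
    have htmem : t ∈ Set.Icc 0 b := ⟨ha.1.trans ht.1.le, ht.2.le⟩
    have := hconc.neg.secant_mono ha htmem hb (ne_of_gt ht.1) (ne_of_gt hab) ht.2.le
    simp only [Pi.neg_apply] at this
    rw [div_le_div_iff₀ (by linarith [ht.1] : (0:ℝ) < t - a) (by linarith : (0:ℝ) < b - a)] at this
    rw [slope_def_field, slope_def_field,
      div_le_div_iff₀ (by linarith : (0:ℝ) < b - a) (by linarith [ht.1] : (0:ℝ) < t - a)]
    nlinarith
  rw [slope_def_field, div_le_iff₀ (by linarith)] at hslope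
  linarith

theorem revenue_optimal_price_near_optimal_utility
    (μ : Measure ℝ) [IsProbabilityMeasure μ]
    (hsupp : μ (Set.Icc (0:ℝ) 1)ᶜ = 0)
    (V V' : ℝ → ℝ) (px prev : ℝ) (hpx : 0 < px)
    (hV0 : V 0 = 0) (hVpx : V px = px)
    (hVflat : ∀ p : ℝ, px ≤ p → V p = px)
    (hVmono : MonotoneOn V (Set.Icc 0 px))
    (hVconc : ConcaveOn ℝ (Set.Icc 0 px) V)
    (hV' : ∀ p ∈ Set.Icc (0:ℝ) px, HasDerivAt V (V' p) p)
    -- the utility-optimal price is `px`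
    (hutilopt : ∀ p ∈ Set.Icc (0:ℝ) px,
      (∫ γ, max (γ * V p) (V p - p) ∂μ) ≤ ∫ γ, max (γ * V px) (V px - px) ∂μ)
    -- `prev` is the revenue-optimal price
    (hprev : prev ∈ Set.Icc (0:ℝ) px)
    (hrevopt : IsMaxOn (fun p => p * (μ {γ : ℝ | p ≤ (1 - γ) * V p}).toReal)
      (Set.Icc (0:ℝ) px) prev) :
    (∫ γ, max (γ * V px) (V px - px) ∂μ) - V' prev * (px - prev)
      ≤ ∫ γ, max (γ * V prev) (V prev - prev) ∂μ := by
  have hae : ∀ᵐ γ ∂μ, γ ∈ Set.Icc (0:ℝ) 1 := by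
    rw [ae_iff]
    convert hsupp using 2
    rfl
  -- integrability
  have hint : ∀ c d : ℝ, Integrable (fun γ : ℝ => max (γ * c) d) μ := by
    intro c d
    refine Integrable.mono' (integrable_const (max |c| |d|))
      ((continuous_id.mul continuous_const).max continuous_const).aestronglyMeasurable ?_
    filter_upwards [hae] with γ hγ
    rw [Real.norm_eq_abs, abs_le]
    constructor
    · calc -(|c| ⊔ |d|) ≤ -|d| := neg_le_neg (le_max_right _ _)
        _ ≤ d := neg_abs_le d
        _ ≤ γ * c ⊔ d := le_max_right _ _
    · rcases max_cases (γ * c) d with ⟨h, _⟩ | ⟨h, _⟩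
      · rw [h]
        calc γ * c ≤ |γ * c| := le_abs_self _
          _ = |γ| * |c| := abs_mul _ _
          _ ≤ 1 * |c| := by
              have : |γ| ≤ 1 := abs_le.mpr ⟨by linarith [hγ.1], hγ.2⟩
              exact mul_le_mul_of_nonneg_right this (abs_nonneg _)
          _ ≤ max |c| |d| := by rw [one_mul]; exact le_max_left _ _
      · rw [h]; exact (le_abs_self d).trans (le_max_right _ _)
  -- key tangent bound
  have htan : V px - V prev ≤ V' prev * (px - prev) := by
    rcases eq_or_lt_of_le hprev.2 with h | h
    · simp [h]
    · exact tangent_le V h hVconc hprev (hV' prev hprev)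
  have hVprevle : V prev ≤ px := by
    have := hVmono hprev (Set.right_mem_Icc.mpr (le_of_lt hpx)) hprev.2
    rwa [hVpx] at this
  -- pointwise a.e. inequality
  have key : ∀ᵐ γ ∂μ, max (γ * V px) (V px - px)
      ≤ max (γ * V prev) (V prev - prev) + V' prev * (px - prev) := by
    filter_upwards [hae] with γ hγ
    have h1 : max (γ * V px) (V px - px) = γ * px := by
      rw [hVpx, sub_self, max_eq_left (mul_nonneg hγ.1 hpx.le)]
    rw [h1]
    have h2 : γ * V prev ≤ max (γ * V prev) (V prev - prev) := le_max_left _ _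
    have h3 : γ * (px - V prev) ≤ px - V prev := by
      nlinarith [hγ.1, hγ.2]
    nlinarith [hγ.1]
  have hmono := integral_mono_ae (hint (V px) (V px - px))
    ((hint (V prev) (V prev - prev)).add (integrable_const (V' prev * (px - prev)))) key
  simp only [Pi.add_apply] at hmono
  rw [integral_add (hint (V prev) (V prev - prev)) (integrable_const _),
    integral_const, probReal_univ, one_smul] at hmono
  linarith
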